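/- Let P1, P2, λ12, λ13, N2, N3 be positive reals and define, for λ23 > 0, R_CF(λ23) = (1/2)·log(1 + P1·λ13/N3 + P1·P2·λ12·λ23/(P1·(λ13·N2 + λ12·N3) + P2·λ23·N2 + N2·N3)). Then R_CF(λ23) < (1/2)·log(1 + P1·λ13/N3 + P1·λ12/N2) for every λ23 > 0, and R_CF(λ23) → (1/2)·log(1 + P1·λ13/N3 + P1·λ12/N2) as λ23 → ∞. -/

import Mathlib

/-- As a function of the relay-destination gain `λ23`, the
compress-and-forward rate `R_CF(λ23)` is strictly below the broadcast cut-set bound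
`(1/2)log(1 + P1λ13/N3 + P1λ12/N2)` for every `λ23 > 0`, and converges to that bound
as `λ23 → ∞`. -/
theorem stmt8 (P1 P2 lam12 lam13 N2 N3 : ℝ)
    (hP1 : 0 < P1) (hP2 : 0 < P2) (hl12 : 0 < lam12) (hl13 : 0 < lam13)
    (hN2 : 0 < N2) (hN3 : 0 < N3) :
    (∀ lam23 : ℝ, 0 < lam23 →
      (1 / 2) * Real.log (1 + P1 * lam13 / N3 +
          P1 * P2 * lam12 * lam23 /
            (P1 * (lam13 * N2 + lam12 * N3) + P2 * lam23 * N2 + N2 * N3))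
        < (1 / 2) * Real.log (1 + P1 * lam13 / N3 + P1 * lam12 / N2)) ∧
    Filter.Tendsto (fun lam23 : ℝ => (1 / 2) * Real.log (1 + P1 * lam13 / N3 +
        P1 * P2 * lam12 * lam23 /
          (P1 * (lam13 * N2 + lam12 * N3) + P2 * lam23 * N2 + N2 * N3)))
      Filter.atTop
      (nhds ((1 / 2) * Real.log (1 + P1 * lam13 / N3 + P1 * lam12 / N2))) := by
  constructor
  · intro lam23 h23
    have hD : 0 < P1 * (lam13 * N2 + lam12 * N3) + P2 * lam23 * N2 + N2 * N3 := by
      positivity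
    have harg : 0 < 1 + P1 * lam13 / N3 +
        P1 * P2 * lam12 * lam23 /
          (P1 * (lam13 * N2 + lam12 * N3) + P2 * lam23 * N2 + N2 * N3) := by
      positivity
    have hfrac : P1 * P2 * lam12 * lam23 /
        (P1 * (lam13 * N2 + lam12 * N3) + P2 * lam23 * N2 + N2 * N3)
        < P1 * lam12 / N2 := by
      rw [div_lt_div_iff₀ hD hN2]
      nlinarith [mul_pos hP1 (mul_pos hl12 (mul_pos hP1 (mul_pos hl13 hN2))),
        mul_pos hP1 (mul_pos hl12 (mul_pos hP1 (mul_pos hl12 hN3))),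
        mul_pos hP1 (mul_pos hl12 (mul_pos hN2 hN3))]
    have := Real.log_lt_log harg
      (show _ < 1 + P1 * lam13 / N3 + P1 * lam12 / N2 by linarith)
    linarith
  · set A := P1 * (lam13 * N2 + lam12 * N3) + N2 * N3 with hA
    have hA0 : 0 < A := by positivity
    have h1 : Filter.Tendsto (fun x : ℝ => A / x + P2 * N2) Filter.atTop
        (nhds (P2 * N2)) := by
      have := (tendsto_const_nhds.div_atTop (f := fun x : ℝ => A)
        (l := Filter.atTop) Filter.tendsto_id).add
        (tendsto_const_nhds (x := P2 * N2) (f := Filter.atTop))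
      simpa using this
    have hden : Filter.Tendsto (fun x : ℝ =>
        P1 * P2 * lam12 / (A / x + P2 * N2)) Filter.atTop
        (nhds (P1 * lam12 / N2)) := by
      have := Filter.Tendsto.div
        (tendsto_const_nhds (x := P1 * P2 * lam12) (f := Filter.atTop)) h1
        (by positivity : (P2 * N2 : ℝ) ≠ 0)
      have heq : P1 * P2 * lam12 / (P2 * N2) = P1 * lam12 / N2 := by
        field_simp
      rwa [heq] at this
    have heq : (fun x : ℝ => P1 * P2 * lam12 / (A / x + P2 * N2)) =ᶠ[Filter.atTop]
        (fun lam23 => P1 * P2 * lam12 * lam23 /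
          (P1 * (lam13 * N2 + lam12 * N3) + P2 * lam23 * N2 + N2 * N3)) := by
      filter_upwards [Filter.eventually_gt_atTop 0] with x hx
      have hd : P1 * (lam13 * N2 + lam12 * N3) + P2 * x * N2 + N2 * N3 ≠ 0 := by
        positivity
      have hd2 : A / x + P2 * N2 ≠ 0 := by positivity
      field_simp [hA]
      ring
    have hfrac : Filter.Tendsto (fun lam23 : ℝ =>
        P1 * P2 * lam12 * lam23 /
          (P1 * (lam13 * N2 + lam12 * N3) + P2 * lam23 * N2 + N2 * N3))
        Filter.atTop (nhds (P1 * lam12 / N2)) := hden.congr' heq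
    have hinner : Filter.Tendsto (fun lam23 : ℝ =>
        1 + P1 * lam13 / N3 + P1 * P2 * lam12 * lam23 /
          (P1 * (lam13 * N2 + lam12 * N3) + P2 * lam23 * N2 + N2 * N3))
        Filter.atTop (nhds (1 + P1 * lam13 / N3 + P1 * lam12 / N2)) :=
      tendsto_const_nhds.add hfrac
    have hpos : (0:ℝ) < 1 + P1 * lam13 / N3 + P1 * lam12 / N2 := by positivity
    exact (tendsto_const_nhds.mul
      ((Real.continuousAt_log (ne_of_gt hpos)).tendsto.comp hinner))
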